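/- Let r > 0 be a real number, j ≥ 3 an integer, and Θ a finite subset of [0, 2π) of cardinality k that contains all the angles 2πℓ/j for ℓ = 1, …, j (interpreted modulo 2π). Let G_Θ be the intersection over θ ∈ Θ of the half planes {z ∈ ℂ : Re(e^{iθ} z) ≤ r}. If sup{ |z| : z ∈ G_Θ } < r·sec(π/j), then k ≥ 2j. -/

import Mathlib

lemma key_re (a θ ψ : ℝ) :
    (Complex.exp ((θ:ℂ) * Complex.I) * ((a:ℂ) * Complex.exp ((ψ:ℂ) * Complex.I))).re
      = a * Real.cos (θ + ψ) := by
  rw [mul_left_comm, ← Complex.exp_add, ← add_mul, ← Complex.ofReal_add, Complex.exp_mul_I]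
  simp [Complex.mul_re, ← Complex.ofReal_add, Complex.cos_ofReal_re, Complex.sin_ofReal_im]

lemma re_exp_mul (θ : ℝ) (z : ℂ) :
    (Complex.exp ((θ:ℂ) * Complex.I) * z).re = ‖z‖ * Real.cos (θ + z.arg) := by
  conv_lhs => rw [← Complex.norm_mul_exp_arg_mul_I z]
  exact key_re _ _ _

lemma cos_le_of_far {b x : ℝ} (hb0 : 0 < b) (hbp : b ≤ Real.pi)
    (h1 : b ≤ x) (h2 : x ≤ 2 * Real.pi - b) : Real.cos x ≤ Real.cos b := by
  rcases le_total x Real.pi with hx | hx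
  · exact Real.cos_le_cos_of_nonneg_of_le_pi hb0.le hx h1
  · have : Real.cos x = Real.cos (2 * Real.pi - x) := by
      rw [Real.cos_two_pi_sub]
    rw [this]
    exact Real.cos_le_cos_of_nonneg_of_le_pi hb0.le (by linarith) (by linarith)

lemma cos_ge_of_near {b x : ℝ} (hbp : b ≤ Real.pi) (h : |x| ≤ b) :
    Real.cos b ≤ Real.cos x := by
  rw [← Real.cos_abs x]
  exact Real.cos_le_cos_of_nonneg_of_le_pi (abs_nonneg x) hbp h



set_option maxHeartbeats 1000000 in
/-- Theorem 4.1 (iii). If a finite set `Θ ⊆ [0, 2π)` of `k` supporting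
angles contains (modulo `2π`) all angles `2πℓ/j` of a regular circumscribing `j`-gon of the
disk of radius `r`, and the resulting polygon `G_Θ` has maximal modulus strictly smaller
than `r·sec(π/j)`, then `k ≥ 2j`. -/
theorem polygon_refinement_doubling (r : ℝ) (hr : 0 < r) (j k : ℕ) (hj : 3 ≤ j)
    (Θ : Finset ℝ) (hΘ : ∀ θ ∈ Θ, 0 ≤ θ ∧ θ < 2 * Real.pi)
    (hcard : Θ.card = k)
    (hsub : ∀ ℓ ∈ Finset.Icc 1 j, ∃ θ ∈ Θ, ∃ m : ℤ,
      θ = 2 * Real.pi * ℓ / j + 2 * Real.pi * m)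
    (h : sSup ((fun z => ‖z‖) ''
        {z : ℂ | ∀ θ ∈ Θ, (Complex.exp ((θ : ℂ) * Complex.I) * z).re ≤ r})
      < r * (1 / Real.cos (Real.pi / j))) :
    2 * j ≤ k := by
  set G := {z : ℂ | ∀ θ ∈ Θ, (Complex.exp ((θ : ℂ) * Complex.I) * z).re ≤ r} with hG
  have hπ := Real.pi_pos
  have hj0 : 0 < (j:ℝ) := by positivity
  set b := Real.pi / j with hb
  have hb0 : 0 < b := by positivity
  have hbp : b ≤ Real.pi / 3 := by
    rw [hb, div_le_div_iff₀ hj0 (by norm_num)]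
    have : (3:ℝ) ≤ j := by exact_mod_cast hj
    nlinarith
  have hbpi : b ≤ Real.pi := by linarith
  have hbj : b * j = Real.pi := by rw [hb]; field_simp
  set c := Real.cos b with hc
  have hc0 : 0 < c := Real.cos_pos_of_mem_Ioo ⟨by linarith, by linarith⟩
  -- representatives 2πℓ/j ∈ Θ for ℓ < j
  have hrep : ∀ ℓ : ℕ, ℓ < j → (2 * Real.pi * ℓ / j : ℝ) ∈ Θ := by
    intro ℓ hℓ
    rcases Nat.eq_zero_or_pos ℓ with h0 | hpos
    · obtain ⟨θ, hθΘ, m, hm⟩ := hsub j (Finset.mem_Icc.mpr ⟨by omega, le_refl j⟩)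
      have hθ := hΘ θ hθΘ
      have hjj : (2 * Real.pi * j / j : ℝ) = 2 * Real.pi := by field_simp
      rw [hjj] at hm
      have h1 : (-1:ℝ) ≤ m := by nlinarith [hθ.1]
      have h2 : (m:ℝ) < 0 := by nlinarith [hθ.2]
      have hm0 : m = -1 := by
        have a1 : (-1:ℤ) ≤ m := by exact_mod_cast h1
        have a2 : m < 0 := by exact_mod_cast h2
        omega
      have hθ0 : θ = 0 := by rw [hm0] at hm; push_cast at hm; linarith
      rw [h0]
      simpa using hθ0 ▸ hθΘ
    · obtain ⟨θ, hθΘ, m, hm⟩ := hsub ℓ (Finset.mem_Icc.mpr ⟨hpos, hℓ.le⟩)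
      have hθ := hΘ θ hθΘ
      have hℓr : 0 < (2 * Real.pi * ℓ / j : ℝ) := by positivity
      have hℓr2 : (2 * Real.pi * ℓ / j : ℝ) < 2 * Real.pi := by
        rw [div_lt_iff₀ hj0]
        have : (ℓ:ℝ) < j := by exact_mod_cast hℓ
        nlinarith
      have h1 : (-1:ℝ) < m := by nlinarith [hθ.1, hθ.2]
      have h2 : (m:ℝ) < 1 := by nlinarith [hθ.1, hθ.2]
      have hm0 : m = 0 := by
        have a1 : (-1:ℤ) < m := by exact_mod_cast h1
        have a2 : m < 1 := by exact_mod_cast h2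
        omega
      have hθeq : θ = 2 * Real.pi * ℓ / j := by
        rw [hm0] at hm; push_cast at hm; linarith
      exact hθeq ▸ hθΘ
  -- the set R of representatives
  set R : Finset ℝ := (Finset.range j).image (fun ℓ : ℕ => 2 * Real.pi * ℓ / j) with hR
  have hRsub : R ⊆ Θ := by
    intro x hx
    rw [hR, Finset.mem_image] at hx
    obtain ⟨ℓ, hℓ, rfl⟩ := hx
    exact hrep ℓ (Finset.mem_range.mp hℓ)
  have hinj : Function.Injective (fun ℓ : ℕ => (2 * Real.pi * ℓ / j : ℝ)) := by
    have hsm : StrictMono (fun ℓ : ℕ => (2 * Real.pi * ℓ / j : ℝ)) := by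
      intro a bb hab
      simp only
      have hab' : (a:ℝ) < bb := by exact_mod_cast hab
      gcongr
    exact hsm.injective
  have hRcard : R.card = j := by
    rw [hR, Finset.card_image_of_injective _ hinj, Finset.card_range]
  have hjk : j ≤ k := by
    rw [← hcard, ← hRcard]; exact Finset.card_le_card hRsub
  by_contra hk
  push_neg at hk
  -- pigeonhole: some arc has no extra angle
  set g : ℝ → ℕ := fun θ => (⌊θ * j / (2 * Real.pi)⌋).toNat with hgdef
  have hmaps : ∀ θ ∈ Θ \ R, g θ ∈ Finset.range j := by
    intro θ hθ
    have hθ2 := hΘ θ (Finset.mem_sdiff.mp hθ).1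
    rw [Finset.mem_range]
    simp only [hgdef]
    have hfl : ⌊θ * j / (2 * Real.pi)⌋ < j := by
      apply Int.floor_lt.mpr
      push_cast
      rw [div_lt_iff₀ (by positivity)]
      nlinarith [hθ2.2]
    omega
  have hcardSD : (Θ \ R).card < j := by
    rw [Finset.card_sdiff_of_subset hRsub, hcard, hRcard]; omega
  have hex : ∃ ℓ ∈ Finset.range j, ℓ ∉ (Θ \ R).image g := by
    by_contra hcon
    push_neg at hcon
    have hs2 : Finset.range j ⊆ (Θ \ R).image g := fun x hx => hcon x hx
    have h1 := Finset.card_le_card hs2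
    have h2 := Finset.card_image_le (s := Θ \ R) (f := g)
    rw [Finset.card_range] at h1
    omega
  obtain ⟨ℓ, hℓj, hℓim⟩ := hex
  rw [Finset.mem_range] at hℓj
  have hℓj' : (ℓ:ℝ) < j := by exact_mod_cast hℓj
  -- no θ in Θ strictly inside the arc (2πℓ/j, 2π(ℓ+1)/j)
  have hgap : ∀ θ ∈ Θ, θ ≤ 2 * Real.pi * ℓ / j ∨ 2 * Real.pi * (ℓ + 1) / j ≤ θ := by
    intro θ hθΘ
    by_contra hcon
    push_neg at hcon
    obtain ⟨hL, hU⟩ := hcon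
    have hθ2 := hΘ θ hθΘ
    have hθR : θ ∉ R := by
      intro hmem
      rw [hR, Finset.mem_image] at hmem
      obtain ⟨m, _, rfl⟩ := hmem
      have h1 : (ℓ:ℝ) < m := by
        by_contra hnot
        push_neg at hnot
        have : 2 * Real.pi * (m:ℝ) / j ≤ 2 * Real.pi * ℓ / j := by gcongr
        linarith
      have h2 : (m:ℝ) < ℓ + 1 := by
        by_contra hnot
        push_neg at hnot
        have : 2 * Real.pi * ((ℓ:ℝ) + 1) / j ≤ 2 * Real.pi * m / j := by gcongr
        linarith
      have a1 : ℓ < m := by exact_mod_cast h1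
      have a2 : m < ℓ + 1 := by exact_mod_cast h2
      omega
    have hmem : θ ∈ Θ \ R := Finset.mem_sdiff.mpr ⟨hθΘ, hθR⟩
    apply hℓim
    rw [Finset.mem_image]
    refine ⟨θ, hmem, ?_⟩
    simp only [hgdef]
    have hfl : ⌊θ * j / (2 * Real.pi)⌋ = (ℓ:ℤ) := by
      apply Int.floor_eq_iff.mpr
      constructor
      · push_cast
        rw [le_div_iff₀ (by positivity)]
        rw [div_lt_iff₀ hj0] at hL
        linarith
      · push_cast
        rw [div_lt_iff₀ (by positivity)]
        rw [lt_div_iff₀ hj0] at hU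
        linarith
    rw [hfl]
    simp
  -- the vertex
  set ψ := 2 * Real.pi * ℓ / j + b with hψ
  have hψlow : b ≤ ψ := by
    have : 0 ≤ 2 * Real.pi * ℓ / j := by positivity
    rw [hψ]; linarith
  have hψhigh : ψ ≤ 2 * Real.pi - b := by
    rw [hψ]
    have hlej : (ℓ:ℝ) ≤ j - 1 := by
      have : (ℓ:ℝ) + 1 ≤ j := by exact_mod_cast hℓj
      linarith
    have h1 : 2 * Real.pi * (ℓ:ℝ) / j ≤ 2 * Real.pi * ((j:ℝ) - 1) / j := by gcongr
    have h2 : 2 * Real.pi * ((j:ℝ) - 1) / j = 2 * Real.pi - 2 * b := by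
      rw [hb]; field_simp
    linarith
  set w : ℂ := ((r / c : ℝ) : ℂ) * Complex.exp (((-ψ : ℝ) : ℂ) * Complex.I) with hw
  have hexp2b : 2 * Real.pi * ((ℓ:ℝ) + 1) / j = 2 * Real.pi * ℓ / j + 2 * b := by
    rw [hb]; field_simp
  have hwmem : w ∈ G := by
    simp only [hG, Set.mem_setOf_eq]
    intro θ hθΘ
    rw [hw, key_re]
    have hθ2 := hΘ θ hθΘ
    have hcosle : Real.cos (θ + -ψ) ≤ c := by
      rcases hgap θ hθΘ with hcase | hcase
      · rw [show θ + -ψ = -(ψ - θ) by ring, Real.cos_neg]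
        apply cos_le_of_far hb0 hbpi
        · rw [hψ]; linarith
        · have : 0 ≤ 2 * Real.pi * ℓ / j := by positivity
          linarith [hθ2.1, hψhigh]
      · apply cos_le_of_far hb0 hbpi
        · rw [hexp2b] at hcase
          rw [hψ]; linarith
        · linarith [hθ2.2, hψlow]
    calc r / c * Real.cos (θ + -ψ) ≤ r / c * c := by
          apply mul_le_mul_of_nonneg_left hcosle (by positivity)
      _ = r := by field_simp
  have habsw : ‖w‖ = r / c := by
    rw [hw, norm_mul, Complex.norm_exp_ofReal_mul_I, Complex.norm_real, Real.norm_eq_abs,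
      abs_of_pos (by positivity), mul_one]
  -- boundedness
  have hbdd : ∀ z ∈ G, ‖z‖ ≤ r / c := by
    intro z hz
    simp only [hG, Set.mem_setOf_eq] at hz
    rcases eq_or_ne z 0 with rfl | hz0
    · simp; positivity
    set φ := z.arg with hφ
    set q : ℤ := ⌊(-φ + b) * j / (2 * Real.pi)⌋ with hq
    have hq1 : (q:ℝ) ≤ (-φ + b) * j / (2 * Real.pi) := Int.floor_le _
    have hq2 : (-φ + b) * j / (2 * Real.pi) < q + 1 := Int.lt_floor_add_one _
    set m : ℤ := q % j with hm
    have hjz : (0:ℤ) < (j:ℤ) := by exact_mod_cast (by omega : 0 < j)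
    have hm0 : 0 ≤ m := Int.emod_nonneg q (by omega)
    have hmj : m < j := Int.emod_lt_of_pos q hjz
    set ℓ'' : ℕ := m.toNat with hℓ''
    have hℓ''j : ℓ'' < j := by omega
    have hθ0 : (2 * Real.pi * ℓ'' / j : ℝ) ∈ Θ := hrep ℓ'' hℓ''j
    have hre := hz _ hθ0
    rw [re_exp_mul] at hre
    have hℓ''m : ((ℓ'':ℕ):ℝ) = (m:ℝ) := by
      rw [hℓ'']; exact_mod_cast congrArg (fun t : ℤ => (t : ℝ)) (Int.toNat_of_nonneg hm0)
    have hmq : (m:ℝ) = (q:ℝ) - (j:ℝ) * ((q / (j:ℤ) : ℤ) : ℝ) := by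
      have h' : m = q - (j:ℤ) * (q / (j:ℤ)) := by rw [hm]; exact Int.emod_def q j
      exact_mod_cast h'
    have hper : Real.cos (2 * Real.pi * ℓ'' / j + φ)
        = Real.cos (2 * Real.pi * q / j + φ) := by
      rw [hℓ''m, hmq]
      have harr : 2 * Real.pi * ((q:ℝ) - (j:ℝ) * ((q / (j:ℤ) : ℤ) : ℝ)) / j + φ
          = (2 * Real.pi * q / j + φ) + ((-(q / (j:ℤ)) : ℤ) : ℝ) * (2 * Real.pi) := by
        push_cast
        field_simp
        ring
      rw [harr, Real.cos_add_int_mul_two_pi]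
    -- |2πq/j + φ| ≤ b
    have hA : -φ + b < ((q:ℝ) + 1) * (2 * Real.pi) / j := by
      rw [lt_div_iff₀ hj0]
      rw [div_lt_iff₀ (by positivity)] at hq2
      nlinarith [hq2]
    have hB : (q:ℝ) * (2 * Real.pi) / j ≤ -φ + b := by
      rw [div_le_iff₀ hj0]
      rw [le_div_iff₀ (by positivity)] at hq1
      nlinarith [hq1]
    have hC : ((q:ℝ) + 1) * (2 * Real.pi) / j = 2 * Real.pi * q / j + 2 * b := by
      rw [hb]; field_simp
    have hD : (q:ℝ) * (2 * Real.pi) / j = 2 * Real.pi * q / j := by ring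
    have hnear : |2 * Real.pi * (q:ℝ) / j + φ| ≤ b := by
      rw [abs_le]
      constructor
      · rw [hC] at hA; linarith
      · rw [hD] at hB; linarith
    have hcos : c ≤ Real.cos (2 * Real.pi * ℓ'' / j + φ) := by
      rw [hper]; exact cos_ge_of_near hbpi hnear
    have hfin : ‖z‖ * c ≤ r := by
      calc ‖z‖ * c ≤ ‖z‖ * Real.cos (2 * Real.pi * ℓ'' / j + φ) := by
            apply mul_le_mul_of_nonneg_left hcos (norm_nonneg z)
        _ ≤ r := hre
    exact (le_div_iff₀ hc0).mpr hfin
  have hBdd : BddAbove ((fun z => ‖z‖) '' G) := by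
    refine ⟨r / c, ?_⟩
    rintro y ⟨z, hz, rfl⟩
    exact hbdd z hz
  have hmem : r / c ∈ (fun z => ‖z‖) '' G := ⟨w, hwmem, habsw⟩
  have hle := le_csSup hBdd hmem
  rw [mul_one_div] at h
  linarith
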